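/- arXiv:2411.17524 — 6 statements merged into one kernel-verified Lean document; each statement's English description precedes it below -/
import Mathlib

section
/- For each k ≥ 2, the set F'_k of non-frozen configurations with exactly k particles is invariant under allowed jumps: if η ∈ F'_k and η ↦ η^{x,x+1} is an allowed jump, then η^{x,x+1} ∈ F'_k. -/
def swapConf (η : ℤ → Bool) (x : ℤ) : ℤ → Bool :=
  fun y => if y = x then η (x + 1) else if y = x + 1 then η x else η y

def Frozen (η : ℤ → Bool) : Prop :=
  ∀ x : ℤ, η x = true → η (x + 1) = false ∧ η (x + 2) = false

lemma swapConf_eq_comp (η : ℤ → Bool) (x : ℤ) :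
    swapConf η x = fun y => η (Equiv.swap x (x + 1) y) := by
  funext y
  by_cases h1 : y = x <;> by_cases h2 : y = x + 1 <;>
    simp [swapConf, Equiv.swap_apply_def, h1, h2]

theorem Fk_invariant (k : ℕ) (hk : 2 ≤ k) (η : ℤ → Bool)
    (hfin : {x : ℤ | η x = true}.Finite) (hcard : {x : ℤ | η x = true}.ncard = k)
    (hnf : ¬ Frozen η) (x : ℤ)
    (hallowed : (η (x - 1) = true ∨ η (x + 2) = true) ∧ η x ≠ η (x + 1)) :
    ¬ Frozen (swapConf η x) ∧ {y : ℤ | swapConf η x y = true}.Finite ∧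
      {y : ℤ | swapConf η x y = true}.ncard = k := by
  obtain ⟨hedge, hne⟩ := hallowed
  have hm1x : (x - 1 : ℤ) ≠ x := by omega
  have hm1x1 : (x - 1 : ℤ) ≠ x + 1 := by omega
  have hp2x : (x + 2 : ℤ) ≠ x := by omega
  have hp2x1 : (x + 2 : ℤ) ≠ x + 1 := by omega
  have hsx : swapConf η x x = η (x + 1) := by simp [swapConf]
  have hsx1 : swapConf η x (x + 1) = η x := by
    simp [swapConf, show (x + 1 : ℤ) ≠ x by omega]
  have hsm1 : swapConf η x (x - 1) = η (x - 1) := by simp [swapConf, hm1x, hm1x1]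
  have hsp2 : swapConf η x (x + 2) = η (x + 2) := by simp [swapConf, hp2x, hp2x1]
  refine ⟨?_, ?_, ?_⟩
  · intro hF
    have e1 : x - 1 + 1 = x := by ring
    have e2 : x - 1 + 2 = x + 1 := by ring
    cases hx : η x with
    | true =>
      rcases hedge with h | h
      · have := hF (x - 1) (by rw [hsm1]; exact h)
        rw [e2, hsx1, hx] at this
        exact absurd this.2 (by simp)
      · have := hF (x + 1) (by rw [hsx1]; exact hx)
        rw [show x + 1 + 1 = x + 2 by ring, hsp2, h] at this
        exact absurd this.1 (by simp)
    | false =>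
      have hx1 : η (x + 1) = true := by
        cases h : η (x + 1) <;> simp_all
      rcases hedge with h | h
      · have := hF (x - 1) (by rw [hsm1]; exact h)
        rw [e1, hsx, hx1] at this
        exact absurd this.1 (by simp)
      · have := hF x (by rw [hsx]; exact hx1)
        rw [hsp2, h] at this
        exact absurd this.2 (by simp)
  · rw [swapConf_eq_comp]
    exact hfin.preimage (Equiv.injective _).injOn
  · rw [swapConf_eq_comp]
    have : {y : ℤ | η (Equiv.swap x (x + 1) y) = true}
        = (Equiv.swap x (x + 1)) ⁻¹' {y : ℤ | η y = true} := rfl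
    rw [this, ← Equiv.image_symm_eq_preimage]
    rw [Set.ncard_image_of_injective _ (Equiv.injective _)]
    exact hcard
end

section
/- The quantity Σ_x (η(x)η(x+1) + η(x)η(x+2)) (counting pairs of particles at distance 1 or 2) being positive and finite is preserved by allowed jumps: if η has finitely many and at least one such pair, then so does η^{x,x+1} after any allowed jump. -/
def closePairs (η : ℤ → Bool) : Set ℤ :=
  {x : ℤ | η x = true ∧ (η (x + 1) = true ∨ η (x + 2) = true)}

theorem closePairs_invariant (η : ℤ → Bool)
    (hfin : (closePairs η).Finite) (hpos : (closePairs η).Nonempty) (x : ℤ)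
    (hallowed : (η (x - 1) = true ∨ η (x + 2) = true) ∧ η x ≠ η (x + 1)) :
    (closePairs (swapConf η x)).Finite ∧ (closePairs (swapConf η x)).Nonempty := by
  obtain ⟨hor, hne⟩ := hallowed
  have sx : swapConf η x x = η (x + 1) := by simp [swapConf]
  have sx1 : swapConf η x (x + 1) = η x := by
    simp only [swapConf]
    rw [if_neg (show x + 1 ≠ x by omega)]
    simp
  have sother : ∀ y, y ≠ x → y ≠ x + 1 → swapConf η x y = η y := by
    intro y h1 h2; simp [swapConf, h1, h2]
  constructor
  · apply Set.Finite.subset (hfin.union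
      ((((Set.finite_singleton (x + 1)).insert x).insert (x - 1)).insert (x - 2)))
    intro y hy
    by_cases h : y = x - 2 ∨ y = x - 1 ∨ y = x ∨ y = x + 1
    · right; simpa using h
    · left
      push_neg at h
      obtain ⟨h1, h2, h3, h4⟩ := h
      have e1 : swapConf η x y = η y := sother y h3 h4
      have e2 : swapConf η x (y + 1) = η (y + 1) := sother (y + 1) (by omega) (by omega)
      have e3 : swapConf η x (y + 2) = η (y + 2) := sother (y + 2) (by omega) (by omega)
      obtain ⟨hy1, hy2⟩ := hy
      exact ⟨e1 ▸ hy1, by rw [← e2, ← e3]; exact hy2⟩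
  · cases hx : η x
    · have hx1 : η (x + 1) = true := by
        cases h : η (x + 1)
        · rw [hx, h] at hne; exact absurd rfl hne
        · rfl
      rcases hor with h | h
      · refine ⟨x - 1, (sother (x - 1) (by omega) (by omega)).trans h, Or.inl ?_⟩
        have e : x - 1 + 1 = x := by ring
        rw [e, sx, hx1]
      · refine ⟨x, sx.trans hx1, Or.inr ?_⟩
        rw [sother (x + 2) (by omega) (by omega)]; exact h
    · cases h2 : η (x + 2)
      · have h : η (x - 1) = true := by
          rcases hor with h | h
          · exact h
          · rw [h2] at h; exact absurd h (by simp)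
        refine ⟨x - 1, (sother (x - 1) (by omega) (by omega)).trans h, Or.inr ?_⟩
        have e : x - 1 + 2 = x + 1 := by ring
        rw [e, sx1, hx]
      · refine ⟨x + 1, sx1.trans hx, Or.inl ?_⟩
        have e : x + 1 + 1 = x + 2 := by ring
        rw [e, sother (x + 2) (by omega) (by omega)]; exact h2
end

section
/- A mobile cluster can move one step: if η has particles at sites x and y with 1 ≤ y − x ≤ 2, then η is connected by a finite sequence of allowed jumps to a configuration η' that agrees with η outside {x,...,y+1} and has particles at two sites x', y' ⊆ {x+1,...,y+1} with 1 ≤ y' − x' ≤ 2 (the cluster shifted right by one), where the jumps only modify sites in {x,...,y+1}. -/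
/-- An allowed jump of the full configuration whose two modified sites lie in `Λ`. -/
def StepIn (Λ : Set ℤ) (η η' : ℤ → Bool) : Prop :=
  ∃ z : ℤ, z ∈ Λ ∧ z + 1 ∈ Λ ∧ (η (z - 1) = true ∨ η (z + 2) = true) ∧
    η z ≠ η (z + 1) ∧ η' = swapConf η z

lemma swap_left (η : ℤ → Bool) (x : ℤ) : swapConf η x x = η (x + 1) := by
  simp [swapConf]

lemma swap_right (η : ℤ → Bool) (x : ℤ) : swapConf η x (x + 1) = η x := by
  have : x + 1 ≠ x := by omega
  simp [swapConf, this]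

lemma swap_other (η : ℤ → Bool) (x z : ℤ) (h1 : z ≠ x) (h2 : z ≠ x + 1) :
    swapConf η x z = η z := by
  simp [swapConf, h1, h2]

theorem mobile_cluster_moves_one_step (η : ℤ → Bool) (x y : ℤ)
    (hx : η x = true) (hy : η y = true) (h1 : 1 ≤ y - x) (h2 : y - x ≤ 2) :
    ∃ η' : ℤ → Bool,
      Relation.ReflTransGen (StepIn (Set.Icc x (y + 1))) η η' ∧
      (∀ z : ℤ, z ∉ Set.Icc x (y + 1) → η' z = η z) ∧
      ∃ x' y' : ℤ, x' ∈ Set.Icc (x + 1) (y + 1) ∧ y' ∈ Set.Icc (x + 1) (y + 1) ∧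
        η' x' = true ∧ η' y' = true ∧ 1 ≤ y' - x' ∧ y' - x' ≤ 2 := by
  have hcase : y = x + 1 ∨ y = x + 2 := by omega
  rcases hcase with rfl | rfl
  · -- adjacent pair at x, x+1
    by_cases h3 : η (x + 2) = true
    · exact ⟨η, Relation.ReflTransGen.refl, fun z _ => rfl,
        x + 1, x + 1 + 1, by simp [Set.mem_Icc], by constructor <;> omega,
        hy, by rwa [show x + 1 + 1 = x + 2 by ring], by omega, by omega⟩
    · have h3' : η (x + 2) = false := by simpa using h3
      set η₁ := swapConf η (x + 1) with hη₁
      set η₂ := swapConf η₁ x with hη₂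
      have e1x : η₁ x = η x := swap_other _ _ _ (by omega) (by omega)
      have e11 : η₁ (x + 1) = η (x + 2) := by
        rw [show x + 2 = x + 1 + 1 by ring]; exact swap_left _ _
      have e12 : η₁ (x + 2) = η (x + 1) := by
        rw [show x + 2 = x + 1 + 1 by ring]; exact swap_right _ _
      have e2x : η₂ x = η₁ (x + 1) := swap_left _ _
      have e21 : η₂ (x + 1) = η₁ x := swap_right _ _
      have e22 : η₂ (x + 2) = η₁ (x + 2) := swap_other _ _ _ (by omega) (by omega)
      refine ⟨η₂, ?_, ?_, x + 1, x + 2, by constructor <;> omega,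
        by constructor <;> omega, ?_, ?_, by omega, by omega⟩
      · refine Relation.ReflTransGen.head (b := η₁) ?_ (Relation.ReflTransGen.single ?_)
        · exact ⟨x + 1, by constructor <;> omega, by constructor <;> omega,
            Or.inl (by rwa [show x + 1 - 1 = x by ring]),
            by rw [show x + 1 + 1 = x + 2 by ring, hy, h3']; simp, rfl⟩
        · exact ⟨x, by constructor <;> omega, by constructor <;> omega,
            Or.inr (by rw [e12]; exact hy),
            by rw [e1x, e11, hx, h3']; simp, rfl⟩
      · intro z hz
        simp only [Set.mem_Icc, not_and_or, not_le] at hz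
        have hz1 : z ≠ x := by omega
        have hz2 : z ≠ x + 1 := by omega
        have hz3 : z ≠ x + 1 + 1 := by omega
        rw [hη₂, swap_other _ _ _ hz1 hz2, hη₁, swap_other _ _ _ hz2 hz3]
      · rw [e21, e1x]; exact hx
      · rw [e22, e12]; exact hy
  · -- pair at distance 2: x, x+2
    by_cases h3 : η (x + 1) = true
    · exact ⟨η, Relation.ReflTransGen.refl, fun z _ => rfl,
        x + 1, x + 2, by constructor <;> omega, by constructor <;> omega,
        h3, hy, by omega, by omega⟩
    · have h3' : η (x + 1) = false := by simpa using h3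
      set η₁ := swapConf η x with hη₁
      have e11 : η₁ (x + 1) = η x := swap_right _ _
      have e12 : η₁ (x + 2) = η (x + 2) := swap_other _ _ _ (by omega) (by omega)
      refine ⟨η₁, Relation.ReflTransGen.single ?_, ?_, x + 1, x + 2,
        by constructor <;> omega, by constructor <;> omega,
        by rw [e11]; exact hx, by rw [e12]; exact hy, by omega, by omega⟩
      · exact ⟨x, by constructor <;> omega, by constructor <;> omega,
          Or.inr hy, by rw [hx, h3']; simp, rfl⟩
      · intro z hz
        simp only [Set.mem_Icc, not_and_or, not_le] at hz
        exact swap_other _ _ _ (by omega) (by omega)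
end

section
/- For a finite interval Λ of ℤ with empty (zero) boundary condition, if σ, σ' ∈ {0,1}^Λ both contain a mobile cluster (two particles at distance at most 2 within Λ) and have the same number of particles, then σ and σ' are connected inside Λ by a finite sequence of allowed jumps inside Λ. -/
/-- An allowed jump inside the interval `[a,b]` with empty (zero) boundary condition,
for configurations on `ℤ` that vanish outside `[a,b]`. -/
def JumpInside (a b : ℤ) (σ σ' : ℤ → Bool) : Prop :=
  ∃ z : ℤ, z ∈ Set.Icc a b ∧ z + 1 ∈ Set.Icc a b ∧
    (σ (z - 1) = true ∨ σ (z + 2) = true) ∧ σ z ≠ σ (z + 1) ∧ σ' = swapConf σ z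

/-- `σ` contains a mobile cluster inside `[a,b]`. -/
def HasMobileCluster (a b : ℤ) (σ : ℤ → Bool) : Prop :=
  ∃ x y : ℤ, x ∈ Set.Icc a b ∧ y ∈ Set.Icc a b ∧ (|x - y| = 1 ∨ |x - y| = 2) ∧
    σ x = true ∧ σ y = true

namespace KAProof

/-- Move a particle from `p` to `q`. -/
def move (σ : ℤ → Bool) (p q : ℤ) : ℤ → Bool :=
  fun y => if y = p then false else if y = q then true else σ y

lemma mvp (σ : ℤ → Bool) (p q : ℤ) : move σ p q p = false := by simp [move]

lemma mvq (σ : ℤ → Bool) (p q : ℤ) (h : q ≠ p) : move σ p q q = true := by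
  simp [move, h]

lemma mvo (σ : ℤ → Bool) (p q y : ℤ) (h1 : y ≠ p) (h2 : y ≠ q) :
    move σ p q y = σ y := by simp [move, h1, h2]

abbrev R (a b : ℤ) : (ℤ → Bool) → (ℤ → Bool) → Prop :=
  Relation.ReflTransGen (JumpInside a b)

noncomputable def cnt (a b : ℤ) (σ : ℤ → Bool) : ℕ :=
  ((Finset.Icc a b).filter (fun z => σ z = true)).card

noncomputable def psi (a b : ℤ) (σ : ℤ → Bool) : ℕ :=
  ((Finset.Icc a b).filter (fun z => σ z = true)).sum (fun z => (b - z).toNat)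

def rpack (b : ℤ) (n : ℕ) : ℤ → Bool := fun z => decide (b + 1 - (n : ℤ) ≤ z ∧ z ≤ b)

lemma jump_right {a b : ℤ} {σ : ℤ → Bool} {z : ℤ} (hz : a ≤ z) (hz1 : z + 1 ≤ b)
    (h1 : σ z = true) (h2 : σ (z + 1) = false)
    (fac : σ (z - 1) = true ∨ σ (z + 2) = true) :
    JumpInside a b σ (move σ z (z + 1)) := by
  refine ⟨z, ?_, ?_, fac, by simp [h1, h2], ?_⟩
  · simp only [Set.mem_Icc]; exact ⟨by omega, by omega⟩
  · simp only [Set.mem_Icc]; exact ⟨by omega, by omega⟩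
  · funext y
    simp only [move, swapConf]
    split_ifs <;> first | rfl | omega | simp_all | (simp_all; omega)

lemma jump_left {a b : ℤ} {σ : ℤ → Bool} {z : ℤ} (hz : a ≤ z) (hz1 : z + 1 ≤ b)
    (h1 : σ z = false) (h2 : σ (z + 1) = true)
    (fac : σ (z - 1) = true ∨ σ (z + 2) = true) :
    JumpInside a b σ (move σ (z + 1) z) := by
  refine ⟨z, ?_, ?_, fac, by simp [h1, h2], ?_⟩
  · simp only [Set.mem_Icc]; exact ⟨by omega, by omega⟩
  · simp only [Set.mem_Icc]; exact ⟨by omega, by omega⟩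
  · funext y
    simp only [move, swapConf]
    split_ifs <;> first | rfl | omega | simp_all | (simp_all; omega)

lemma filter_move {a b : ℤ} {σ : ℤ → Bool} {p q : ℤ}
    (hp : p ∈ Finset.Icc a b) (hq : q ∈ Finset.Icc a b)
    (hσp : σ p = true) (hσq : σ q = false) (hpq : p ≠ q) :
    (Finset.Icc a b).filter (fun z => move σ p q z = true) =
      insert q (((Finset.Icc a b).filter (fun z => σ z = true)).erase p) := by
  ext z
  by_cases h1 : z = p
  · subst h1
    simp [move, hpq]
  · by_cases h2 : z = q
    · subst h2
      simp [move, h1, hq]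
    · simp [move, h1, h2]

lemma q_not_mem_erase {a b : ℤ} {σ : ℤ → Bool} {p q : ℤ} (hσq : σ q = false) :
    q ∉ (((Finset.Icc a b).filter (fun z => σ z = true)).erase p) := by
  simp only [Finset.mem_erase, Finset.mem_filter]
  intro h
  rw [hσq] at h; simp at h

lemma p_mem_filter {a b : ℤ} {σ : ℤ → Bool} {p : ℤ} (hp : p ∈ Finset.Icc a b)
    (hσp : σ p = true) : p ∈ (Finset.Icc a b).filter (fun z => σ z = true) :=
  Finset.mem_filter.mpr ⟨hp, hσp⟩

lemma cnt_move {a b : ℤ} {σ : ℤ → Bool} {p q : ℤ}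
    (hp : p ∈ Finset.Icc a b) (hq : q ∈ Finset.Icc a b)
    (hσp : σ p = true) (hσq : σ q = false) (hpq : p ≠ q) :
    cnt a b (move σ p q) = cnt a b σ := by
  unfold cnt
  rw [filter_move hp hq hσp hσq hpq]
  rw [Finset.card_insert_of_notMem (q_not_mem_erase hσq),
    Finset.card_erase_of_mem (p_mem_filter hp hσp)]
  have : 0 < ((Finset.Icc a b).filter (fun z => σ z = true)).card :=
    Finset.card_pos.mpr ⟨p, p_mem_filter hp hσp⟩
  omega

lemma psi_move_lt {a b : ℤ} {σ : ℤ → Bool} {p q : ℤ}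
    (hpa : a ≤ p) (hpq : p < q) (hqb : q ≤ b)
    (hσp : σ p = true) (hσq : σ q = false) :
    psi a b (move σ p q) < psi a b σ := by
  have hp : p ∈ Finset.Icc a b := by simp only [Finset.mem_Icc]; exact ⟨hpa, by omega⟩
  have hq : q ∈ Finset.Icc a b := by
    simp only [Finset.mem_Icc]; exact ⟨by omega, hqb⟩
  unfold psi
  rw [filter_move hp hq hσp hσq (by omega)]
  rw [Finset.sum_insert (q_not_mem_erase hσq)]
  have herase : (∑ z ∈ (((Finset.Icc a b).filter (fun z => σ z = true)).erase p),
      (b - z).toNat) + (b - p).toNat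
      = ∑ z ∈ ((Finset.Icc a b).filter (fun z => σ z = true)), (b - z).toNat :=
    Finset.sum_erase_add _ _ (p_mem_filter hp hσp)
  have h1 : (b - q).toNat < (b - p).toNat := by omega
  omega

lemma supp_move {a b : ℤ} {σ : ℤ → Bool} {p q : ℤ}
    (hsupp : ∀ z, σ z = true → a ≤ z ∧ z ≤ b) (hqa : a ≤ q) (hqb : q ≤ b) :
    ∀ z, move σ p q z = true → a ≤ z ∧ z ≤ b := by
  intro z hz
  by_cases h1 : z = p
  · subst h1; rw [mvp] at hz; simp at hz
  · by_cases h2 : z = q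
    · subst h2; exact ⟨hqa, hqb⟩
    · rw [mvo σ p q z h1 h2] at hz
      exact hsupp z hz

lemma pair_slide_left {a b : ℤ} {σ : ℤ → Bool} {x : ℤ}
    (ha : a ≤ x - 1) (hb : x + 1 ≤ b)
    (h0 : σ (x - 1) = false) (h1 : σ x = true) (h2 : σ (x + 1) = true) :
    R a b σ (move σ (x + 1) (x - 1)) := by
  have e1 : x - 1 + 1 = x := by ring
  have e2 : x - 1 + 2 = x + 1 := by ring
  have j1 : JumpInside a b σ (move σ x (x - 1)) := by
    have := jump_left (a := a) (b := b) (σ := σ) (z := x - 1) (by omega) (by omega)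
      h0 (by rw [e1]; exact h1) (Or.inr (by rw [e2]; exact h2))
    rwa [e1] at this
  have j2 : JumpInside a b (move σ x (x - 1)) (move (move σ x (x - 1)) (x + 1) x) := by
    apply jump_left (by omega) (by omega)
    · exact mvp σ x (x - 1)
    · rw [mvo σ x (x - 1) (x + 1) (by omega) (by omega)]; exact h2
    · left; exact mvq σ x (x - 1) (by omega)
  have heq : move (move σ x (x - 1)) (x + 1) x = move σ (x + 1) (x - 1) := by
    funext y
    simp only [move]
    split_ifs <;> first | rfl | omega | simp_all | (simp_all; omega)
  rw [heq] at j2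
  exact Relation.ReflTransGen.head j1 (Relation.ReflTransGen.single j2)

lemma triple_slide_right {a b : ℤ} {σ : ℤ → Bool} {x : ℤ}
    (ha : a ≤ x) (hb : x + 3 ≤ b)
    (h0 : σ x = true) (h1 : σ (x + 1) = true) (h2 : σ (x + 2) = true)
    (h3 : σ (x + 3) = false) :
    R a b σ (move σ x (x + 3)) := by
  have e1 : x + 2 + 1 = x + 3 := by ring
  have e2 : x + 2 - 1 = x + 1 := by ring
  have e3 : x + 1 + 1 = x + 2 := by ring
  have e4 : x + 1 - 1 = x := by ring
  have j1 : JumpInside a b σ (move σ (x + 2) (x + 3)) := by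
    have := jump_right (a := a) (b := b) (σ := σ) (z := x + 2) (by omega) (by omega)
      h2 (by rw [e1]; exact h3) (Or.inl (by rw [e2]; exact h1))
    rwa [e1] at this
  have j2 : JumpInside a b (move σ (x + 2) (x + 3))
      (move (move σ (x + 2) (x + 3)) (x + 1) (x + 2)) := by
    have := jump_right (a := a) (b := b) (σ := move σ (x + 2) (x + 3)) (z := x + 1)
      (by omega) (by omega)
      (by rw [mvo σ (x + 2) (x + 3) (x + 1) (by omega) (by omega)]; exact h1)
      (by rw [e3]; exact mvp σ (x + 2) (x + 3))
      (Or.inl (by rw [e4, mvo σ (x + 2) (x + 3) x (by omega) (by omega)]; exact h0))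
    rwa [e3] at this
  have j3 : JumpInside a b (move (move σ (x + 2) (x + 3)) (x + 1) (x + 2))
      (move (move (move σ (x + 2) (x + 3)) (x + 1) (x + 2)) x (x + 1)) := by
    apply jump_right (by omega) (by omega)
    · rw [mvo _ (x + 1) (x + 2) x (by omega) (by omega),
        mvo σ (x + 2) (x + 3) x (by omega) (by omega)]
      exact h0
    · exact mvp _ (x + 1) (x + 2)
    · right; exact mvq _ (x + 1) (x + 2) (by omega)
  have heq : move (move (move σ (x + 2) (x + 3)) (x + 1) (x + 2)) x (x + 1) =
      move σ x (x + 3) := by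
    funext y
    simp only [move]
    split_ifs <;> first | rfl | omega | simp_all | (simp_all; omega)
  rw [heq] at j3
  exact Relation.ReflTransGen.head j1
    (Relation.ReflTransGen.head j2 (Relation.ReflTransGen.single j3))

/-- The fetch maneuver: a pair at `(w, w+1)` travels left across the empty gap
`(s, w)`, absorbs the particle at `s`, and the triple travels back;
the net effect is that the particle at `s` moves to `w - 1`. -/
lemma fetch {a b : ℤ} : ∀ (g : ℕ) (σ : ℤ → Bool) (s w : ℤ), w = s + 2 + g →
    a ≤ s → w + 1 ≤ b → σ s = true → (∀ t, s < t → t < w → σ t = false) →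
    σ w = true → σ (w + 1) = true →
    R a b σ (move σ s (w - 1)) := by
  intro g
  induction g with
  | zero =>
    intro σ s w hw ha hb hs hgap hw1 hw2
    have hsw : w = s + 2 := by push_cast at hw; omega
    subst hsw
    have j : JumpInside a b σ (move σ s (s + 1)) := by
      apply jump_right (by omega) (by omega) hs (hgap (s + 1) (by omega) (by omega))
      exact Or.inr hw1
    rw [show s + 2 - 1 = s + 1 by ring]
    exact Relation.ReflTransGen.single j
  | succ g ih =>
    intro σ s w hw ha hb hs hgap hw1 hw2
    push_cast at hw
    -- step 1: slide the pair (w, w+1) left to (w-1, w)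
    have hstep1 : R a b σ (move σ (w + 1) (w - 1)) :=
      pair_slide_left (by omega) (by omega) (hgap (w - 1) (by omega) (by omega)) hw1 hw2
    -- step 2: by IH, fetch with the pair now at (w-1, w)
    have hstep2 : R a b (move σ (w + 1) (w - 1))
        (move (move σ (w + 1) (w - 1)) s (w - 1 - 1)) := by
      apply ih _ s (w - 1) (by push_cast; omega) ha (by omega)
      · rw [mvo σ (w + 1) (w - 1) s (by omega) (by omega)]; exact hs
      · intro t ht1 ht2
        rw [mvo σ (w + 1) (w - 1) t (by omega) (by omega)]
        exact hgap t ht1 (by omega)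
      · exact mvq σ (w + 1) (w - 1) (by omega)
      · rw [show w - 1 + 1 = w by ring,
          mvo σ (w + 1) (w - 1) w (by omega) (by omega)]
        exact hw1
    rw [show w - 1 - 1 = w - 2 by ring] at hstep2
    -- step 3: the triple at (w-2, w-1, w) slides right to (w-1, w, w+1)
    have hstep3 : R a b (move (move σ (w + 1) (w - 1)) s (w - 2))
        (move (move (move σ (w + 1) (w - 1)) s (w - 2)) (w - 2) (w - 2 + 3)) := by
      apply triple_slide_right (by omega) (by omega)
      · exact mvq _ s (w - 2) (by omega)
      · rw [show w - 2 + 1 = w - 1 by ring,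
          mvo _ s (w - 2) (w - 1) (by omega) (by omega)]
        exact mvq σ (w + 1) (w - 1) (by omega)
      · rw [show w - 2 + 2 = w by ring, mvo _ s (w - 2) w (by omega) (by omega),
          mvo σ (w + 1) (w - 1) w (by omega) (by omega)]
        exact hw1
      · rw [show w - 2 + 3 = w + 1 by ring,
          mvo _ s (w - 2) (w + 1) (by omega) (by omega)]
        exact mvp σ (w + 1) (w - 1)
    have hg2 : σ (w - 2) = false := hgap (w - 2) (by omega) (by omega)
    have hw2' : σ (w - 2 + 3) = true := by
      rw [show w - 2 + 3 = w + 1 by ring]; exact hw2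
    have heq : move (move (move σ (w + 1) (w - 1)) s (w - 2)) (w - 2) (w - 2 + 3) =
        move σ s (w - 1) := by
      funext y
      simp only [move]
      split_ifs <;> first | rfl | omega | simp_all | (simp_all; omega)
    rw [heq] at hstep3
    exact (hstep1.trans hstep2).trans hstep3

lemma eq_rpack {a b : ℤ} {σ : ℤ → Bool} {h : ℤ} (ha : a - 1 ≤ h) (hb : h ≤ b)
    (hiff : ∀ z, σ z = true ↔ (h < z ∧ z ≤ b)) :
    σ = rpack b (cnt a b σ) := by
  have hfil : (Finset.Icc a b).filter (fun z => σ z = true) = Finset.Icc (h + 1) b := by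
    ext z
    simp only [Finset.mem_filter, Finset.mem_Icc, hiff z]
    omega
  have hc : cnt a b σ = (b - h).toNat := by
    unfold cnt
    rw [hfil, Int.card_Icc]
    congr 1; ring
  have hn : ((cnt a b σ : ℕ) : ℤ) = b - h := by rw [hc]; omega
  funext z
  by_cases hz : h < z ∧ z ≤ b
  · rw [(hiff z).mpr hz]
    symm
    simp only [rpack, decide_eq_true_eq]
    omega
  · have hz' : σ z = false := by
      cases hσz : σ z
      · rfl
      · exact absurd ((hiff z).mp hσz) hz
    rw [hz']
    symm
    simp only [rpack, decide_eq_false_iff_not]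
    omega

lemma cluster_pairs {a b : ℤ} {σ : ℤ → Bool} (hG : HasMobileCluster a b σ) :
    ∃ p q : ℤ, σ p = true ∧ σ q = true ∧ (q = p + 1 ∨ q = p + 2) := by
  obtain ⟨x, y, _, _, habs, hσx, hσy⟩ := hG
  rcases habs with h | h
  · rcases (abs_eq (by norm_num : (0:ℤ) ≤ 1)).mp h with h' | h'
    · exact ⟨y, x, hσy, hσx, Or.inl (by omega)⟩
    · exact ⟨x, y, hσx, hσy, Or.inl (by omega)⟩
  · rcases (abs_eq (by norm_num : (0:ℤ) ≤ 2)).mp h with h' | h'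
    · exact ⟨y, x, hσy, hσx, Or.inr (by omega)⟩
    · exact ⟨x, y, hσx, hσy, Or.inr (by omega)⟩

lemma main {a b : ℤ} : ∀ (N : ℕ) (σ : ℤ → Bool), psi a b σ < N →
    (∀ z, σ z = true → a ≤ z ∧ z ≤ b) → HasMobileCluster a b σ →
    R a b σ (rpack b (cnt a b σ)) := by
  intro N
  induction N with
  | zero => intro σ h; omega
  | succ N ih =>
    intro σ hψ hsupp hG
    by_cases hc1 : ∃ p, σ p = true ∧ σ (p + 1) = false ∧ σ (p + 2) = true
    · obtain ⟨p, hp1, hp2, hp3⟩ := hc1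
      have hpa := hsupp p hp1
      have hpb := hsupp (p + 2) hp3
      have j : JumpInside a b σ (move σ p (p + 1)) :=
        jump_right (by omega) (by omega) hp1 hp2 (Or.inr hp3)
      have hsuppτ : ∀ z, move σ p (p + 1) z = true → a ≤ z ∧ z ≤ b :=
        supp_move hsupp (by omega) (by omega)
      have hGτ : HasMobileCluster a b (move σ p (p + 1)) := by
        refine ⟨p + 2, p + 1, ?_, ?_,
          Or.inl (by rw [show p + 2 - (p + 1) = 1 by ring]; exact abs_one), ?_, ?_⟩
        · simp only [Set.mem_Icc]; exact ⟨by omega, by omega⟩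
        · simp only [Set.mem_Icc]; exact ⟨by omega, by omega⟩
        · rw [mvo σ p (p + 1) (p + 2) (by omega) (by omega)]; exact hp3
        · exact mvq σ p (p + 1) (by omega)
      have hψτ : psi a b (move σ p (p + 1)) < psi a b σ :=
        psi_move_lt (by omega) (by omega) (by omega) hp1 hp2
      have hcnt : cnt a b (move σ p (p + 1)) = cnt a b σ :=
        cnt_move (by simp only [Finset.mem_Icc]; exact ⟨by omega, by omega⟩)
          (by simp only [Finset.mem_Icc]; exact ⟨by omega, by omega⟩)
          hp1 hp2 (by omega)
      have h' := ih (move σ p (p + 1)) (by omega) hsuppτ hGτ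
      rw [hcnt] at h'
      exact Relation.ReflTransGen.head j h'
    · -- there is an adjacent pair
      obtain ⟨p, q, hσp, hσq, hq⟩ := cluster_pairs hG
      have hpair : ∃ x, σ x = true ∧ σ (x + 1) = true := by
        rcases hq with h | h
        · exact ⟨p, hσp, by rw [← h]; exact hσq⟩
        · cases hm : σ (p + 1)
          · exact absurd ⟨p, hσp, hm, by rw [show p + 2 = q by omega]; exact hσq⟩ hc1
          · exact ⟨p + 1, hm, by rw [show p + 1 + 1 = q by omega]; exact hσq⟩
      obtain ⟨x, hx, hx1⟩ := hpair
      have hne : ((Finset.Icc a b).filter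
          (fun z => σ z = true ∧ σ (z + 1) = true)).Nonempty := by
        refine ⟨x, Finset.mem_filter.mpr ⟨?_, hx, hx1⟩⟩
        have := hsupp x hx
        simp only [Finset.mem_Icc]; exact ⟨this.1, this.2⟩
      obtain ⟨x0, hx0mem, hx0max⟩ := Finset.exists_max_image _ id hne
      simp only [id] at hx0max
      rw [Finset.mem_filter, Finset.mem_Icc] at hx0mem
      obtain ⟨hx0Icc, hσx0, hσx01⟩ := hx0mem
      have hx01b : x0 + 1 ≤ b := (hsupp (x0 + 1) hσx01).2
      have hσx02 : σ (x0 + 2) = false := by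
        cases h2 : σ (x0 + 2)
        · rfl
        · exfalso
          have hmem : x0 + 1 ∈ (Finset.Icc a b).filter
              (fun z => σ z = true ∧ σ (z + 1) = true) := by
            refine Finset.mem_filter.mpr
              ⟨by simp only [Finset.mem_Icc]; exact ⟨by omega, by omega⟩, hσx01, ?_⟩
            rw [show x0 + 1 + 1 = x0 + 2 by ring]; exact h2
          have := hx0max (x0 + 1) hmem
          omega
      by_cases h2b : x0 + 2 ≤ b
      · -- the topmost pair can move its top particle right
        have j : JumpInside a b σ (move σ (x0 + 1) (x0 + 1 + 1)) := by
          apply jump_right (by omega) (by omega) hσx01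
          · rw [show x0 + 1 + 1 = x0 + 2 by ring]; exact hσx02
          · left; rw [show x0 + 1 - 1 = x0 by ring]; exact hσx0
        rw [show x0 + 1 + 1 = x0 + 2 by ring] at j
        have hsuppτ : ∀ z, move σ (x0 + 1) (x0 + 2) z = true → a ≤ z ∧ z ≤ b :=
          supp_move hsupp (by omega) (by omega)
        have hGτ : HasMobileCluster a b (move σ (x0 + 1) (x0 + 2)) := by
          refine ⟨x0 + 2, x0, ?_, ?_,
            Or.inr (by rw [show x0 + 2 - x0 = 2 by ring]; exact abs_two), ?_, ?_⟩
          · simp only [Set.mem_Icc]; exact ⟨by omega, by omega⟩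
          · simp only [Set.mem_Icc]; exact ⟨by omega, by omega⟩
          · exact mvq σ (x0 + 1) (x0 + 2) (by omega)
          · rw [mvo σ (x0 + 1) (x0 + 2) x0 (by omega) (by omega)]; exact hσx0
        have hψτ : psi a b (move σ (x0 + 1) (x0 + 2)) < psi a b σ := by
          apply psi_move_lt (by omega) (by omega) (by omega) hσx01 hσx02
        have hcnt : cnt a b (move σ (x0 + 1) (x0 + 2)) = cnt a b σ :=
          cnt_move (by simp only [Finset.mem_Icc]; exact ⟨by omega, by omega⟩)
            (by simp only [Finset.mem_Icc]; exact ⟨by omega, by omega⟩)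
            hσx01 hσx02 (by omega)
        have h' := ih (move σ (x0 + 1) (x0 + 2)) (by omega) hsuppτ hGτ
        rw [hcnt] at h'
        exact Relation.ReflTransGen.head j h'
      · -- the pair touches the right boundary: x0 + 1 = b
        have hx0b : x0 + 1 = b := by omega
        have hσb : σ b = true := by rw [← hx0b]; exact hσx01
        have hσb1 : σ (b - 1) = true := by rw [show b - 1 = x0 by omega]; exact hσx0
        by_cases hHe : ((Finset.Icc a (b - 1)).filter (fun z => σ z = false)).Nonempty
        · obtain ⟨h, hhmem, hhmax⟩ := Finset.exists_max_image _ id hHe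
          simp only [id] at hhmax
          rw [Finset.mem_filter, Finset.mem_Icc] at hhmem
          obtain ⟨⟨hha, hhb⟩, hσh⟩ := hhmem
          have hrun : ∀ t, h < t → t ≤ b → σ t = true := by
            intro t ht1 ht2
            by_cases htb : t = b
            · rw [htb]; exact hσb
            · cases hσt : σ t
              · exfalso
                have hmem : t ∈ (Finset.Icc a (b - 1)).filter (fun z => σ z = false) :=
                  Finset.mem_filter.mpr
                    ⟨by simp only [Finset.mem_Icc]; exact ⟨by omega, by omega⟩, hσt⟩
                have := hhmax t hmem
                omega
              · rfl
          have hhb2 : h ≤ b - 2 := by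
            by_contra hcon
            have he : h = b - 1 := by omega
            rw [he, hσb1] at hσh
            simp at hσh
          by_cases hSe : ((Finset.Icc a h).filter (fun z => σ z = true)).Nonempty
          · obtain ⟨s, hsmem, hsmax⟩ := Finset.exists_max_image _ id hSe
            simp only [id] at hsmax
            rw [Finset.mem_filter, Finset.mem_Icc] at hsmem
            obtain ⟨⟨hsa, hsh⟩, hσs⟩ := hsmem
            have hsh' : s < h := by
              rcases lt_or_eq_of_le hsh with h' | h'
              · exact h'
              · rw [h'] at hσs; rw [hσs] at hσh; simp at hσh
            have hgap : ∀ t, s < t → t < h + 1 → σ t = false := by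
              intro t ht1 ht2
              cases hσt : σ t
              · rfl
              · exfalso
                have hmem : t ∈ (Finset.Icc a h).filter (fun z => σ z = true) :=
                  Finset.mem_filter.mpr
                    ⟨by simp only [Finset.mem_Icc]; exact ⟨by omega, by omega⟩, hσt⟩
                have := hsmax t hmem
                omega
            have hfetch : R a b σ (move σ s (h + 1 - 1)) := by
              apply fetch ((h + 1 - (s + 2)).toNat) σ s (h + 1) (by omega) (by omega)
                (by omega) hσs hgap (hrun (h + 1) (by omega) (by omega))
              rw [show h + 1 + 1 = h + 2 by ring]
              exact hrun (h + 2) (by omega) (by omega)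
            rw [show h + 1 - 1 = h by ring] at hfetch
            have hsuppτ : ∀ z, move σ s h z = true → a ≤ z ∧ z ≤ b :=
              supp_move hsupp (by omega) (by omega)
            have hGτ : HasMobileCluster a b (move σ s h) := by
              refine ⟨h + 1, h, ?_, ?_,
                Or.inl (by rw [show h + 1 - h = 1 by ring]; exact abs_one), ?_, ?_⟩
              · simp only [Set.mem_Icc]; exact ⟨by omega, by omega⟩
              · simp only [Set.mem_Icc]; exact ⟨by omega, by omega⟩
              · rw [mvo σ s h (h + 1) (by omega) (by omega)]
                exact hrun (h + 1) (by omega) (by omega)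
              · exact mvq σ s h (by omega)
            have hψτ : psi a b (move σ s h) < psi a b σ :=
              psi_move_lt (by omega) (by omega) (by omega) hσs hσh
            have hcnt : cnt a b (move σ s h) = cnt a b σ :=
              cnt_move (by simp only [Finset.mem_Icc]; exact ⟨by omega, by omega⟩)
                (by simp only [Finset.mem_Icc]; exact ⟨by omega, by omega⟩)
                hσs hσh (by omega)
            have h' := ih (move σ s h) (by omega) hsuppτ hGτ
            rw [hcnt] at h'
            exact hfetch.trans h'
          · -- no particle below the topmost hole: σ is already right-packed
            have hiff : ∀ z, σ z = true ↔ (h < z ∧ z ≤ b) := by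
              intro z
              constructor
              · intro hz
                have hzb := hsupp z hz
                refine ⟨?_, hzb.2⟩
                by_contra hcon
                have hmem : z ∈ (Finset.Icc a h).filter (fun z => σ z = true) :=
                  Finset.mem_filter.mpr
                    ⟨by simp only [Finset.mem_Icc]; exact ⟨by omega, by omega⟩, hz⟩
                exact hSe ⟨z, hmem⟩
              · intro hz; exact hrun z hz.1 hz.2
            rw [← eq_rpack (by omega) (by omega) hiff]
        · -- no hole at all: σ is fully packed
          have hiff : ∀ z, σ z = true ↔ (a - 1 < z ∧ z ≤ b) := by
            intro z
            constructor
            · intro hz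
              have := hsupp z hz
              omega
            · intro hz
              by_cases hzb : z = b
              · rw [hzb]; exact hσb
              · cases hσz : σ z
                · exfalso
                  have hmem : z ∈ (Finset.Icc a (b - 1)).filter (fun z => σ z = false) :=
                    Finset.mem_filter.mpr
                      ⟨by simp only [Finset.mem_Icc]; exact ⟨by omega, by omega⟩, hσz⟩
                  exact hHe ⟨z, hmem⟩
                · rfl
          rw [← eq_rpack (by omega) (by omega) hiff]

lemma jump_symm {a b : ℤ} : Symmetric (JumpInside a b) := by
  intro σ τ hj
  obtain ⟨z, hz, hz1, fac, hne, heq⟩ := hj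
  subst heq
  refine ⟨z, hz, hz1, ?_, ?_, ?_⟩
  · have e1 : swapConf σ z (z - 1) = σ (z - 1) := by
      simp [swapConf, show z - 1 ≠ z by omega, show z - 1 ≠ z + 1 by omega]
    have e2 : swapConf σ z (z + 2) = σ (z + 2) := by
      simp [swapConf, show z + 2 ≠ z by omega, show z + 2 ≠ z + 1 by omega]
    rw [e1, e2]; exact fac
  · have e1 : swapConf σ z z = σ (z + 1) := by simp [swapConf]
    have e2 : swapConf σ z (z + 1) = σ z := by
      simp [swapConf, show z + 1 ≠ z by omega]
    rw [e1, e2]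
    exact fun hcon => hne hcon.symm
  · funext y
    simp only [swapConf]
    split_ifs <;> first | rfl | omega | simp_all | (simp_all; omega)

end KAProof

theorem connected_inside_interval (a b : ℤ) (σ σ' : ℤ → Bool)
    (hσ0 : ∀ z : ℤ, z ∉ Set.Icc a b → σ z = false)
    (hσ'0 : ∀ z : ℤ, z ∉ Set.Icc a b → σ' z = false)
    (hG : HasMobileCluster a b σ) (hG' : HasMobileCluster a b σ')
    (hcard : ((Finset.Icc a b).filter (fun z => σ z = true)).card =
      ((Finset.Icc a b).filter (fun z => σ' z = true)).card) :
    Relation.ReflTransGen (JumpInside a b) σ σ' := by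
  have hsupp : ∀ z, σ z = true → a ≤ z ∧ z ≤ b := by
    intro z hz
    by_contra hcon
    rw [hσ0 z (by simp only [Set.mem_Icc]; omega)] at hz
    simp at hz
  have hsupp' : ∀ z, σ' z = true → a ≤ z ∧ z ≤ b := by
    intro z hz
    by_contra hcon
    rw [hσ'0 z (by simp only [Set.mem_Icc]; omega)] at hz
    simp at hz
  have h1 := KAProof.main (a := a) (b := b) (KAProof.psi a b σ + 1) σ
    (by omega) hsupp hG
  have h2 := KAProof.main (a := a) (b := b) (KAProof.psi a b σ' + 1) σ'
    (by omega) hsupp' hG'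
  have hcc : KAProof.cnt a b σ = KAProof.cnt a b σ' := hcard
  rw [hcc] at h1
  exact h1.trans ((@Relation.ReflTransGen.symmetric _ _ ⟨fun _ _ h => KAProof.jump_symm h⟩).symm _ _ h2)
end

section
/- The set G_Λ of configurations on a finite interval Λ containing a mobile cluster is invariant under allowed jumps inside Λ (with empty boundary condition): if σ ∈ G_Λ and σ ↦ σ^{x,x+1} is allowed inside Λ, then σ^{x,x+1} ∈ G_Λ. -/
lemma swap_ne (σ : ℤ → Bool) (x y : ℤ) (h1 : y ≠ x) (h2 : y ≠ x + 1) :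
    swapConf σ x y = σ y := by simp [swapConf, h1, h2]

theorem G_invariant (a b : ℤ) (σ : ℤ → Bool)
    (hσ0 : ∀ z : ℤ, z ∉ Set.Icc a b → σ z = false)
    (hG : HasMobileCluster a b σ) (x : ℤ)
    (hx : x ∈ Set.Icc a b) (hx1 : x + 1 ∈ Set.Icc a b)
    (hallowed : (σ (x - 1) = true ∨ σ (x + 2) = true) ∧ σ x ≠ σ (x + 1)) :
    HasMobileCluster a b (swapConf σ x) := by
  obtain ⟨hb, hne⟩ := hallowed
  have key : ∀ z, σ z = true → z ∈ Set.Icc a b := by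
    intro z hz
    by_contra h
    rw [hσ0 z h] at hz
    exact Bool.false_ne_true hz
  have hsx : swapConf σ x x = σ (x + 1) := by simp [swapConf]
  have hsx1 : swapConf σ x (x + 1) = σ x := by
    have : (x + 1 : ℤ) ≠ x := by omega
    simp [swapConf, this]
  cases hσx : σ x with
  | false =>
    have hσx1 : σ (x + 1) = true := by
      cases h : σ (x + 1)
      · exact absurd (hσx.trans h.symm) hne
      · rfl
    rcases hb with h | h
    · refine ⟨x - 1, x, key _ h, hx, Or.inl (by rw [show x - 1 - x = (-1:ℤ) from by ring]; norm_num), ?_, hsx.trans hσx1⟩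
      rw [swap_ne σ x _ (by omega) (by omega)]; exact h
    · refine ⟨x, x + 2, hx, key _ h, Or.inr (by rw [show x - (x + 2) = (-2:ℤ) from by ring]; norm_num), hsx.trans hσx1, ?_⟩
      rw [swap_ne σ x _ (by omega) (by omega)]; exact h
  | true =>
    rcases hb with h | h
    · refine ⟨x - 1, x + 1, key _ h, hx1, Or.inr (by rw [show x - 1 - (x + 1) = (-2:ℤ) from by ring]; norm_num), ?_, hsx1.trans hσx⟩
      rw [swap_ne σ x _ (by omega) (by omega)]; exact h
    · refine ⟨x + 1, x + 2, hx1, key _ h, Or.inl (by rw [show x + 1 - (x + 2) = (-1:ℤ) from by ring]; norm_num), hsx1.trans hσx, ?_⟩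
      rw [swap_ne σ x _ (by omega) (by omega)]; exact h
end

section
/- If ν is a stationary probability measure for the generator L (ν(Lf)=0 for all local f) and σ is a finite configuration on Λ_n with ν(σ)=0 (probability of the cylinder set), then every configuration σ' connected to σ inside Λ_n also satisfies ν(σ')=0. -/
open MeasureTheory

def IsLocalFn (f : (ℤ → Bool) → ℝ) : Prop :=
  ∃ s : Finset ℤ, ∀ η η' : ℤ → Bool, (∀ x ∈ s, η x = η' x) → f η = f η'

/-- The generator `L f(η) = Σ_x c_x(η) [f(η^{x,x+1}) − f(η)]`. -/
noncomputable def gen (c : ℤ → (ℤ → Bool) → ℝ) (f : (ℤ → Bool) → ℝ) (η : ℤ → Bool) : ℝ :=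
  ∑' x : ℤ, c x η * (f (swapConf η x) - f η)

/-- The cylinder set of configurations agreeing with `σ` on `Λ_n = [-n,n]`. -/
def cyl (n : ℕ) (σ : ℤ → Bool) : Set (ℤ → Bool) :=
  {η : ℤ → Bool | ∀ x ∈ Finset.Icc (-(n : ℤ)) (n : ℤ), η x = σ x}

/-- Zero extension outside `Λ_n`. -/
noncomputable def extZ (n : ℕ) (σ : ℤ → Bool) : ℤ → Bool :=
  fun y => if y ∈ Finset.Icc (-(n : ℤ)) (n : ℤ) then σ y else false

/-- An allowed jump inside `Λ_n`, with the constraint read off the zero extension. -/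
def JumpIn (n : ℕ) (σ σ' : ℤ → Bool) : Prop :=
  ∃ z : ℤ, z ∈ Finset.Icc (-(n : ℤ)) (n : ℤ) ∧ z + 1 ∈ Finset.Icc (-(n : ℤ)) (n : ℤ) ∧
    (extZ n σ (z - 1) = true ∨ extZ n σ (z + 2) = true) ∧ σ z ≠ σ (z + 1) ∧
    σ' = swapConf σ z

/-! ### Auxiliary lemmas -/

lemma swapConf_left (η : ℤ → Bool) (z : ℤ) : swapConf η z z = η (z + 1) := by
  simp [swapConf]

lemma swapConf_right (η : ℤ → Bool) (z : ℤ) : swapConf η z (z + 1) = η z := by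
  simp [swapConf]

lemma swapConf_other (η : ℤ → Bool) (z y : ℤ) (h1 : y ≠ z) (h2 : y ≠ z + 1) :
    swapConf η z y = η y := by
  simp [swapConf, h1, h2]

lemma IsLocalFn.rep {f : (ℤ → Bool) → ℝ} (hf : IsLocalFn f) :
    ∃ (s : Finset ℤ) (F : ({x // x ∈ s} → Bool) → ℝ), ∀ η, f η = F (fun y => η y.1) := by
  obtain ⟨s, hs⟩ := hf
  refine ⟨s, fun g => f (fun y => if h : y ∈ s then g ⟨y, h⟩ else false), fun η => ?_⟩
  apply hs
  intro x hx
  simp [hx]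

lemma IsLocalFn.measurable {f : (ℤ → Bool) → ℝ} (hf : IsLocalFn f) : Measurable f := by
  obtain ⟨s, F, hF⟩ := hf.rep
  have : f = F ∘ (fun η (y : {x // x ∈ s}) => η y.1) := funext hF
  rw [this]
  exact (measurable_of_countable F).comp
    (measurable_pi_lambda _ fun y => measurable_pi_apply _)

lemma IsLocalFn.bounded {f : (ℤ → Bool) → ℝ} (hf : IsLocalFn f) : ∃ C, ∀ η, |f η| ≤ C := by
  obtain ⟨s, F, hF⟩ := hf.rep
  have hne : (Finset.univ : Finset ({x // x ∈ s} → Bool)).Nonempty := Finset.univ_nonempty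
  refine ⟨Finset.univ.sup' hne (fun g => |F g|), fun η => ?_⟩
  rw [hF]
  exact Finset.le_sup' (fun g => |F g|) (Finset.mem_univ _)

lemma integrable_of_bounded {ν : Measure (ℤ → Bool)} [IsProbabilityMeasure ν]
    {f : (ℤ → Bool) → ℝ} (hm : Measurable f) {C : ℝ} (hb : ∀ η, |f η| ≤ C) :
    Integrable f ν := by
  apply Integrable.mono' (integrable_const C) hm.aestronglyMeasurable
  exact Filter.Eventually.of_forall fun η => by simpa [Real.norm_eq_abs] using hb η

lemma measurable_swapConf (z : ℤ) : Measurable (fun η => swapConf η z) := by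
  apply measurable_pi_lambda
  intro y
  unfold swapConf
  by_cases h1 : y = z
  · simpa [h1] using measurable_pi_apply (z + 1)
  · by_cases h2 : y = z + 1
    · simpa [h1, h2] using measurable_pi_apply z
    · simpa [h1, h2] using measurable_pi_apply y

/-- The key single-step lemma. -/
lemma jump_null
    (c : ℤ → (ℤ → Bool) → ℝ)
    (hc0 : ∀ x η, 0 ≤ c x η)
    (htrans : ∀ x (η : ℤ → Bool), c x η = c 0 (fun y => η (x + y)))
    (hlocal : IsLocalFn (c 0))
    (hpos : ∀ x η, 0 < c x η ↔ (η (x - 1) = true ∨ η (x + 2) = true))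
    (ν : Measure (ℤ → Bool)) [IsProbabilityMeasure ν]
    (hstat : ∀ f : (ℤ → Bool) → ℝ, IsLocalFn f → ∫ η, gen c f η ∂ν = 0)
    (n : ℕ) (σ σ' : ℤ → Bool)
    (hnull : ν (cyl n σ) = 0)
    (hJ : JumpIn n σ σ') :
    ν (cyl n σ') = 0 := by
  obtain ⟨z, hz, hz1, hcon, hne, hσ'⟩ := hJ
  subst hσ'
  -- the indicator function of the cylinder
  set f : (ℤ → Bool) → ℝ := (cyl n σ).indicator (fun _ => 1) with hfdef
  have hmemiff : ∀ η η' : ℤ → Bool,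
      (∀ x ∈ Finset.Icc (-(n : ℤ)) (n : ℤ), η x = η' x) → (η ∈ cyl n σ ↔ η' ∈ cyl n σ) := by
    intro η η' h
    constructor
    · intro hη x hx; rw [← h x hx]; exact hη x hx
    · intro hη x hx; rw [h x hx]; exact hη x hx
  have hfcong : ∀ η η' : ℤ → Bool, (η ∈ cyl n σ ↔ η' ∈ cyl n σ) → f η = f η' := by
    intro η η' hiff
    simp only [hfdef]
    by_cases hm : η ∈ cyl n σ
    · rw [Set.indicator_of_mem hm, Set.indicator_of_mem (hiff.1 hm)]
    · rw [Set.indicator_of_notMem hm, Set.indicator_of_notMem (fun hb => hm (hiff.2 hb))]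
  have hfloc : IsLocalFn f := by
    refine ⟨Finset.Icc (-(n : ℤ)) (n : ℤ), fun η η' h => ?_⟩
    exact hfcong η η' (hmemiff η η' h)
  have hf01 : ∀ η, 0 ≤ f η ∧ f η ≤ 1 := by
    intro η
    simp only [hfdef]
    by_cases hm : η ∈ cyl n σ
    · rw [Set.indicator_of_mem hm]; norm_num
    · rw [Set.indicator_of_notMem hm]; norm_num
  have hfb : ∀ η, |f η| ≤ 1 := fun η => abs_le.2 ⟨by linarith [(hf01 η).1], (hf01 η).2⟩
  have hfm : Measurable f := hfloc.measurable
  -- locality, measurability, boundedness of the rates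
  have hcl : ∀ x, IsLocalFn (c x) := by
    intro x
    obtain ⟨s, hs⟩ := hlocal
    refine ⟨s.image (fun y => x + y), fun η η' h => ?_⟩
    rw [htrans x η, htrans x η']
    apply hs
    intro y hy
    exact h (x + y) (Finset.mem_image_of_mem _ hy)
  have hcm : ∀ x, Measurable (c x) := fun x => (hcl x).measurable
  obtain ⟨C, hC⟩ := hlocal.bounded
  have hcb : ∀ x η, |c x η| ≤ C := by
    intro x η; rw [htrans x η]; exact hC _
  -- the generator applied to f is a finite sum
  set S : Finset ℤ := Finset.Icc (-(n : ℤ) - 1) (n : ℤ) with hSdef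
  have hfswap : ∀ (η : ℤ → Bool) (x : ℤ), x ∉ S → f (swapConf η x) = f η := by
    intro η x hx
    have hx' : x < -(n : ℤ) - 1 ∨ (n : ℤ) < x := by
      simp only [hSdef, Finset.mem_Icc, not_and_or, not_le] at hx
      omega
    have hagree : ∀ y ∈ Finset.Icc (-(n : ℤ)) (n : ℤ), swapConf η x y = η y := by
      intro y hy
      simp only [Finset.mem_Icc] at hy
      apply swapConf_other
      · omega
      · omega
    exact hfcong _ _ (hmemiff _ _ hagree)
  have hgen : ∀ η, gen c f η = ∑ x ∈ S, c x η * (f (swapConf η x) - f η) := by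
    intro η
    apply tsum_eq_sum
    intro x hx
    rw [hfswap η x hx]
    ring
  -- integrability of each summand piece
  have hint1 : ∀ x : ℤ, Integrable (fun η => c x η * f (swapConf η x)) ν := by
    intro x
    apply integrable_of_bounded ((hcm x).mul (hfm.comp (measurable_swapConf x)))
      (C := C * 1)
    intro η
    rw [Pi.mul_apply, abs_mul]
    exact mul_le_mul (hcb x η) (hfb _) (abs_nonneg _) ((abs_nonneg _).trans (hcb x η))
  have hint2 : ∀ x : ℤ, Integrable (fun η => c x η * f η) ν := by
    intro x
    apply integrable_of_bounded ((hcm x).mul hfm) (C := C * 1)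
    intro η
    rw [Pi.mul_apply, abs_mul]
    exact mul_le_mul (hcb x η) (hfb _) (abs_nonneg _) ((abs_nonneg _).trans (hcb x η))
  have hint3 : ∀ x : ℤ, Integrable (fun η => c x η * (f (swapConf η x) - f η)) ν := by
    intro x
    have := (hint1 x).sub (hint2 x)
    apply this.congr
    apply Filter.Eventually.of_forall
    intro η
    simp only [Pi.sub_apply]
    ring
  -- the integral of the negative part vanishes
  have hneg : ∀ x : ℤ, ∫ η, c x η * f η ∂ν = 0 := by
    intro x
    have hae : (fun η => c x η * f η) =ᵐ[ν] 0 := by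
      rw [Filter.EventuallyEq, ae_iff]
      apply measure_mono_null _ hnull
      intro η hη
      simp only [Set.mem_setOf_eq, Pi.zero_apply] at hη
      by_contra hmem
      exact hη (by simp [hfdef, Set.indicator_of_notMem hmem])
    rw [integral_congr_ae hae]
    simp
  -- stationarity: the sum of the nonnegative integrals is zero
  have hzero : ∑ x ∈ S, ∫ η, c x η * f (swapConf η x) ∂ν = 0 := by
    have h0 := hstat f hfloc
    have : ∫ η, gen c f η ∂ν = ∑ x ∈ S, ∫ η, c x η * (f (swapConf η x) - f η) ∂ν := by
      rw [show (fun η => gen c f η) = fun η => ∑ x ∈ S, c x η * (f (swapConf η x) - f η)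
        from funext hgen]
      exact integral_finset_sum S (fun x _ => hint3 x)
    rw [this] at h0
    calc ∑ x ∈ S, ∫ η, c x η * f (swapConf η x) ∂ν
        = ∑ x ∈ S, (∫ η, c x η * (f (swapConf η x) - f η) ∂ν + ∫ η, c x η * f η ∂ν) := by
          apply Finset.sum_congr rfl
          intro x _
          rw [← integral_add (hint3 x) (hint2 x)]
          congr 1
          ext η
          ring
      _ = ∑ x ∈ S, ∫ η, c x η * (f (swapConf η x) - f η) ∂ν := by
          apply Finset.sum_congr rfl
          intro x _
          rw [hneg x, add_zero]
      _ = 0 := h0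
  -- each term is nonnegative, hence each vanishes; look at the term x = z
  have hnonneg : ∀ x ∈ S, 0 ≤ ∫ η, c x η * f (swapConf η x) ∂ν := by
    intro x _
    apply integral_nonneg
    intro η
    exact mul_nonneg (hc0 x η) (hf01 _).1
  have hzS : z ∈ S := by
    simp only [Finset.mem_Icc] at hz
    simp only [hSdef, Finset.mem_Icc]
    omega
  have hz0 : ∫ η, c z η * f (swapConf η z) ∂ν = 0 :=
    (Finset.sum_eq_zero_iff_of_nonneg hnonneg).1 hzero z hzS
  -- conclude: the integrand is a.e. zero, but positive on cyl n (swapConf σ z)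
  have hae0 : (fun η => c z η * f (swapConf η z)) =ᵐ[ν] 0 := by
    rw [← integral_eq_zero_iff_of_nonneg (fun η => mul_nonneg (hc0 z η) (hf01 _).1) (hint1 z)]
    exact hz0
  have hnullset : ν {η | c z η * f (swapConf η z) ≠ 0} = 0 := by
    have := hae0
    rw [Filter.EventuallyEq, ae_iff] at this
    simpa using this
  apply measure_mono_null _ hnullset
  -- cyl n (swapConf σ z) ⊆ {η | c z η * f (swapConf η z) ≠ 0}
  intro η hη
  simp only [Set.mem_setOf_eq]
  have hzmem : z ∈ Finset.Icc (-(n : ℤ)) (n : ℤ) := hz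
  -- swapConf η z ∈ cyl n σ
  have hswapmem : swapConf η z ∈ cyl n σ := by
    intro y hy
    by_cases h1 : y = z
    · subst h1
      rw [swapConf_left]
      have := hη (y + 1) hz1
      rw [this, swapConf_right]
    · by_cases h2 : y = z + 1
      · subst h2
        rw [swapConf_right]
        have := hη z hzmem
        rw [this, swapConf_left]
      · rw [swapConf_other _ _ _ h1 h2]
        have := hη y hy
        rw [this, swapConf_other _ _ _ h1 h2]
  have hfval : f (swapConf η z) = 1 := by
    simp [hfdef, Set.indicator_of_mem hswapmem]
  -- c z η > 0
  have hcpos : 0 < c z η := by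
    rw [hpos]
    rcases hcon with hL | hR
    · left
      unfold extZ at hL
      by_cases hmem : z - 1 ∈ Finset.Icc (-(n : ℤ)) (n : ℤ)
      · rw [if_pos hmem] at hL
        have h1 : (z - 1 : ℤ) ≠ z := by omega
        have h2 : (z - 1 : ℤ) ≠ z + 1 := by omega
        rw [hη (z - 1) hmem, swapConf_other _ _ _ h1 h2]
        exact hL
      · rw [if_neg hmem] at hL
        exact absurd hL (by simp)
    · right
      unfold extZ at hR
      by_cases hmem : z + 2 ∈ Finset.Icc (-(n : ℤ)) (n : ℤ)
      · rw [if_pos hmem] at hR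
        have h1 : (z + 2 : ℤ) ≠ z := by omega
        have h2 : (z + 2 : ℤ) ≠ z + 1 := by omega
        rw [hη (z + 2) hmem, swapConf_other _ _ _ h1 h2]
        exact hR
      · rw [if_neg hmem] at hR
        exact absurd hR (by simp)
  rw [hfval, mul_one]
  exact ne_of_gt hcpos

theorem null_cylinder_propagates
    (c : ℤ → (ℤ → Bool) → ℝ)
    (hc0 : ∀ x η, 0 ≤ c x η)
    (htrans : ∀ x (η : ℤ → Bool), c x η = c 0 (fun y => η (x + y)))
    (hlocal : IsLocalFn (c 0))
    (hswap : ∀ x η, c x η = c x (swapConf η x))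
    (hpos : ∀ x η, 0 < c x η ↔ (η (x - 1) = true ∨ η (x + 2) = true))
    (ν : Measure (ℤ → Bool)) [IsProbabilityMeasure ν]
    (hstat : ∀ f : (ℤ → Bool) → ℝ, IsLocalFn f → ∫ η, gen c f η ∂ν = 0)
    (n : ℕ) (σ σ' : ℤ → Bool)
    (hnull : ν (cyl n σ) = 0)
    (hconn : Relation.ReflTransGen (JumpIn n) σ σ') :
    ν (cyl n σ') = 0 := by
  induction hconn with
  | refl => exact hnull
  | tail _ hJ ih =>
    exact jump_null c hc0 htrans hlocal hpos ν hstat n _ _ ih hJ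
end
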